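/- Let A ∈ M_{s+1, n−s}(ℝ) with rows a₀,...,a_s viewed as vectors in V_• = span(e_{s+1},...,e_n) ⊆ ℝ^{n+1}. Let R_A = (I_{s+1} | A) and suppose w ∈ Λʲ(ℝ^{n+1}) represents a rank-j subgroup of ℤ^{n+1} and satisfies max_{0 ≤ i ≤ s} max_{J ⊆ {1,...,n}, #J = j−1} |⟨(e_i + a_i) ∧ e_J, w⟩| < 1. Then ‖w‖ ≤ C(1 + ‖π_•(w)‖), where π_• is the orthogonal projection onto Λ(V_•) and C is a constant depending only on A. -/

import Mathlib

open Finset Real ENNReal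

/-- The index `0` in `Fin (m + 1 + c)`. -/
def zeroIdx (m c : ℕ) : Fin (m + 1 + c) := ⟨0, by omega⟩

/-- The coefficient `⟨e_i ∧ e_J, w⟩` of `w ∈ Λ(ℝ^N)` in coordinates with respect to the
orthonormal basis `{e_I}`. -/
def wedgeCoeff {N : ℕ} (i : Fin N) (J : Finset (Fin N)) (w : Finset (Fin N) → ℝ) : ℝ :=
  if i ∈ J then 0 else (-1 : ℝ) ^ (J.filter (· < i)).card * w (insert i J)

/-- The `i`-th row of `A ∈ M_{m+1,c}(ℝ)` viewed as the vector
`a_i = Σ_{k} A i k · e_{m+1+k}` in `V_• = span(e_{m+1},…,e_{m+c}) ⊆ ℝ^{m+1+c}`. -/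
def rowVec {m c : ℕ} (A : Matrix (Fin (m + 1)) (Fin c) ℝ) (i : Fin (m + 1)) :
    Fin (m + 1 + c) → ℝ :=
  fun t => if h : m + 1 ≤ (t : ℕ) then A i ⟨(t : ℕ) - (m + 1), by omega⟩ else 0

/-- `⟨(e_i + a_i) ∧ e_J, w⟩`, the `(i, J)`-entry of `R_A c(w)` where `R_A = (I_{m+1} | A)`. -/
def rowCoeff {m c : ℕ} (A : Matrix (Fin (m + 1)) (Fin c) ℝ) (i : Fin (m + 1))
    (J : Finset (Fin (m + 1 + c))) (w : Finset (Fin (m + 1 + c)) → ℝ) : ℝ :=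
  wedgeCoeff (Fin.castLE (by omega) i) J w + ∑ t, rowVec A i t * wedgeCoeff t J w

/-- The orthogonal projection `π_•` of `Λ(ℝ^N)` onto `Λ(V_•)`,
`V_• = span(e_{m+1}, e_{m+2}, …)`, in coordinates. -/
def piBullet {N : ℕ} (m : ℕ) (w : Finset (Fin N) → ℝ) : Finset (Fin N) → ℝ :=
  fun I => if ∀ t ∈ I, m + 1 ≤ (t : ℕ) then w I else 0

/-- The Euclidean norm on `Λ(ℝ^N)` in coordinates. -/
noncomputable def normL {N : ℕ} (w : Finset (Fin N) → ℝ) : ℝ :=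
  Real.sqrt (∑ I : Finset (Fin N), w I ^ 2)

/-- `w ∈ Λʲ(ℝ^N)` represents a rank-`j` subgroup of `ℤ^N`: it is the wedge
`v₁ ∧ ⋯ ∧ v_j` of a `ℤ`-basis `v₁, …, v_j` (a linearly independent family of integer
vectors) of such a subgroup, in coordinates. -/
def Represents {N : ℕ} (j : ℕ) (w : Finset (Fin N) → ℝ) : Prop :=
  ∃ v : Fin j → (Fin N → ℤ), LinearIndependent ℤ v ∧ ∀ I : Finset (Fin N),
    w I = if h : I.card = j then
      Matrix.det (Matrix.of fun a b : Fin j => ((v a (I.orderIsoOfFin h b) : ℤ) : ℝ))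
    else 0

/-- The higher order Diophantine exponent `ω_j(A)` of `A ∈ M_{m+1,c}(ℝ)` (so that the
ambient space is `ℝ^{m+1+c}`): the supremum of `v` for which there exist `w ∈ Λʲ`
representing rank-`j` subgroups of `ℤ^{m+1+c}` with `‖π_•(w)‖` arbitrarily large such that
`max_{i, J ⊆ {1,…}, #J = j−1} |⟨(e_i + a_i) ∧ e_J, w⟩| < ‖π_•(w)‖^{−(v+1−j)/j}`. -/
noncomputable def omegaHigher (m c : ℕ) (A : Matrix (Fin (m + 1)) (Fin c) ℝ) (j : ℕ) :
    ℝ≥0∞ :=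
  sSup {e : ℝ≥0∞ | ∃ v : ℝ, e = ENNReal.ofReal v ∧ ∀ M : ℝ, 0 < M →
    ∃ w : Finset (Fin (m + 1 + c)) → ℝ, Represents j w ∧ M < normL (piBullet m w) ∧
      ∀ (i : Fin (m + 1)) (J : Finset (Fin (m + 1 + c))), zeroIdx m c ∉ J →
        J.card = j - 1 →
        |rowCoeff A i J w| < (normL (piBullet m w)) ^ (-((v + 1 - (j : ℝ)) / j))}

/-- Lemma 5.1: if `w` represents a rank-`j` subgroup of `ℤ^{m+1+c}` and
`max_{0≤i≤m} max_{J ⊆ {1,…}, #J = j−1} |⟨(e_i + a_i) ∧ e_J, w⟩| < 1`, then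
`‖w‖ ≤ C (1 + ‖π_•(w)‖)` for a constant `C` depending only on `A`. -/
theorem norm_le_of_rowCoeff_lt_one {m c : ℕ} (A : Matrix (Fin (m + 1)) (Fin c) ℝ) :
    ∃ C : ℝ, 0 < C ∧ ∀ (j : ℕ), 1 ≤ j → ∀ w : Finset (Fin (m + 1 + c)) → ℝ,
      Represents j w →
      (∀ (i : Fin (m + 1)) (J : Finset (Fin (m + 1 + c))), zeroIdx m c ∉ J →
        J.card = j - 1 → |rowCoeff A i J w| < 1) →
      normL w ≤ C * (1 + normL (piBullet m w)) := by

  classical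
  set N := m + 1 + c with hN
  set K : ℝ := ∑ i : Fin (m + 1), ∑ t : Fin (m + 1 + c), |rowVec A i t| with hKdef
  have hK0 : 0 ≤ K := Finset.sum_nonneg fun _ _ =>
    Finset.sum_nonneg fun _ _ => abs_nonneg _
  have hK1 : (1 : ℝ) ≤ 1 + K := by linarith
  refine ⟨Real.sqrt (2 ^ (m + 1 + c)) * (1 + K) ^ (m + 1 + c), by positivity, ?_⟩
  intro j hj w hrep hsmall
  set B := normL (piBullet m w) with hBdef
  have hB0 : 0 ≤ B := Real.sqrt_nonneg _
  obtain ⟨v, -, hw⟩ := hrep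
  have hzero : ∀ I, I.card ≠ j → w I = 0 := by
    intro I h; rw [hw]; exact dif_neg h
  have key : ∀ k : ℕ, ∀ I : Finset (Fin (m + 1 + c)),
      (I.filter fun t => t.val < m + 1).card ≤ k → I.card = j →
      |w I| ≤ (1 + K) ^ k * (1 + B) := by
    intro k
    induction k with
    | zero =>
      intro I hfil hcard
      have hfe : (I.filter fun t => t.val < m + 1) = ∅ :=
        Finset.card_eq_zero.mp (Nat.le_antisymm hfil (Nat.zero_le _))
      have hall : ∀ t ∈ I, m + 1 ≤ (t : ℕ) := by
        intro t ht
        by_contra h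
        have : t ∈ I.filter fun t => t.val < m + 1 :=
          Finset.mem_filter.mpr ⟨ht, by omega⟩
        rw [hfe] at this; simp at this
      have hpi : piBullet m w I = w I := if_pos hall
      have h1 : |w I| ≤ B := by
        rw [← hpi, hBdef, normL, ← Real.sqrt_sq_eq_abs]
        exact Real.sqrt_le_sqrt (Finset.single_le_sum
          (f := fun I => piBullet m w I ^ 2) (fun i _ => sq_nonneg _)
          (Finset.mem_univ I))
      have : ((1 : ℝ) + K) ^ 0 * (1 + B) = 1 + B := by ring
      rw [this]; linarith
    | succ k ih =>
      intro I hfil hcard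
      have hpowpos : (0 : ℝ) < (1 + K) ^ k := by positivity
      have hone_le : (1 : ℝ) ≤ (1 + K) ^ k := by
        apply one_le_pow₀ hK1
      by_cases hk : (I.filter fun t => t.val < m + 1).card ≤ k
      · have h1 := ih I hk hcard
        have h2 : (1 + K) ^ k * (1 + B) ≤ (1 + K) ^ (k + 1) * (1 + B) := by
          have h3 : ((1 : ℝ) + K) ^ (k + 1) = (1 + K) ^ k * (1 + K) := by ring
          have h4 : (1 + K) ^ k ≤ (1 + K) ^ k * (1 + K) :=
            le_mul_of_one_le_right (le_of_lt hpowpos) hK1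
          rw [h3]
          exact mul_le_mul_of_nonneg_right h4 (by linarith)
        linarith
      · have hfcard : (I.filter fun t => t.val < m + 1).card = k + 1 := by omega
        have hfc : (I.filter fun t => t.val < m + 1).Nonempty := by
          rw [← Finset.card_pos]; omega
        set F := I.filter fun t => t.val < m + 1 with hF
        set i := F.min' hfc with hi
        have hiF : i ∈ F := F.min'_mem hfc
        have hiI : i ∈ I := (Finset.mem_filter.mp hiF).1
        have hismall : (i : ℕ) < m + 1 := (Finset.mem_filter.mp hiF).2
        set J := I.erase i with hJ
        have hJcard : J.card = j - 1 := by
          rw [hJ, Finset.card_erase_of_mem hiI, hcard]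
        have hzJ : zeroIdx m c ∉ J := by
          intro h0
          have h0I : zeroIdx m c ∈ I := Finset.mem_of_mem_erase h0
          have h0F : zeroIdx m c ∈ F :=
            Finset.mem_filter.mpr ⟨h0I, by simp [zeroIdx]⟩
          have hle : i ≤ zeroIdx m c := F.min'_le _ h0F
          have hieq : i = zeroIdx m c := by
            apply Fin.ext
            have : (i : ℕ) ≤ (zeroIdx m c : ℕ) := hle
            simp [zeroIdx] at this ⊢
            omega
          rw [hJ, hieq] at h0
          exact Finset.notMem_erase _ _ h0
        set i0 : Fin (m + 1) := ⟨(i : ℕ), hismall⟩ with hi0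
        have hcast : (Fin.castLE (by omega : m + 1 ≤ m + 1 + c) i0) = i := by
          apply Fin.ext; rfl
        have hrc := hsmall i0 J hzJ hJcard
        have hiJ : i ∉ J := Finset.notMem_erase _ _
        have hins : insert i J = I := Finset.insert_erase hiI
        have hwedge : |wedgeCoeff i J w| = |w I| := by
          rw [wedgeCoeff, if_neg hiJ, hins, abs_mul, abs_pow, abs_neg, abs_one,
            one_pow, one_mul]
        have heq : wedgeCoeff i J w
            = rowCoeff A i0 J w - ∑ t, rowVec A i0 t * wedgeCoeff t J w := by
          rw [rowCoeff, hcast]; ring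
        have hterm : ∀ t : Fin (m + 1 + c),
            |rowVec A i0 t * wedgeCoeff t J w|
              ≤ |rowVec A i0 t| * ((1 + K) ^ k * (1 + B)) := by
          intro t
          rw [abs_mul]
          rcases eq_or_ne (rowVec A i0 t) 0 with h | h
          · rw [h]; simp
          · have ht : m + 1 ≤ (t : ℕ) := by
              by_contra hcon
              exact h (by rw [rowVec]; exact dif_neg hcon)
            apply mul_le_mul_of_nonneg_left _ (abs_nonneg _)
            by_cases htJ : t ∈ J
            · rw [wedgeCoeff, if_pos htJ, abs_zero]; positivity
            · rw [wedgeCoeff, if_neg htJ, abs_mul, abs_pow, abs_neg, abs_one,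
                one_pow, one_mul]
              apply ih
              · have h1 : (insert t J).filter (fun t => t.val < m + 1)
                    = J.filter (fun t => t.val < m + 1) := by
                  rw [Finset.filter_insert, if_neg (by omega)]
                have h2 : J.filter (fun t => t.val < m + 1) = F.erase i := by
                  rw [hJ, hF, Finset.filter_erase]
                rw [h1, h2, Finset.card_erase_of_mem hiF, hfcard]
                omega
              · rw [Finset.card_insert_of_notMem htJ, hJcard]; omega
        have hsum : |∑ t, rowVec A i0 t * wedgeCoeff t J w|
            ≤ K * ((1 + K) ^ k * (1 + B)) := by
          calc |∑ t, rowVec A i0 t * wedgeCoeff t J w|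
              ≤ ∑ t, |rowVec A i0 t * wedgeCoeff t J w| := Finset.abs_sum_le_sum_abs _ _
            _ ≤ ∑ t, |rowVec A i0 t| * ((1 + K) ^ k * (1 + B)) :=
                Finset.sum_le_sum fun t _ => hterm t
            _ = (∑ t, |rowVec A i0 t|) * ((1 + K) ^ k * (1 + B)) := by
                rw [Finset.sum_mul]
            _ ≤ K * ((1 + K) ^ k * (1 + B)) := by
                apply mul_le_mul_of_nonneg_right _ (by positivity)
                exact Finset.single_le_sum
                  (f := fun i => ∑ t, |rowVec A i t|)
                  (fun _ _ => Finset.sum_nonneg fun _ _ => abs_nonneg _)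
                  (Finset.mem_univ i0)
        have hwI : |w I| ≤ 1 + K * ((1 + K) ^ k * (1 + B)) := by
          rw [← hwedge, heq]
          calc |rowCoeff A i0 J w - ∑ t, rowVec A i0 t * wedgeCoeff t J w|
              ≤ |rowCoeff A i0 J w| + |∑ t, rowVec A i0 t * wedgeCoeff t J w| :=
                abs_sub _ _
            _ ≤ 1 + K * ((1 + K) ^ k * (1 + B)) := by
                have := le_of_lt hrc
                linarith
        have hfin : 1 + K * ((1 + K) ^ k * (1 + B)) ≤ (1 + K) ^ (k + 1) * (1 + B) := by
          have hexp : ((1 : ℝ) + K) ^ (k + 1) * (1 + B)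
              = (1 + K) ^ k * (1 + B) + K * ((1 + K) ^ k * (1 + B)) := by ring
          rw [hexp]
          nlinarith
        linarith
  set D : ℝ := (1 + K) ^ (m + 1 + c) * (1 + B) with hD
  have hD0 : 0 ≤ D := by positivity
  have hall : ∀ I : Finset (Fin (m + 1 + c)), |w I| ≤ D := by
    intro I
    by_cases hc : I.card = j
    · have h1 := key (I.filter fun t => t.val < m + 1).card I le_rfl hc
      have hle : (I.filter fun t => t.val < m + 1).card ≤ m + 1 + c := by
        calc (I.filter fun t => t.val < m + 1).card ≤ I.card :=
              Finset.card_filter_le _ _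
          _ ≤ (Finset.univ : Finset (Fin (m + 1 + c))).card := Finset.card_le_univ I
          _ = m + 1 + c := by simp
      have h2 : ((1 : ℝ) + K) ^ (I.filter fun t => t.val < m + 1).card
          ≤ (1 + K) ^ (m + 1 + c) := pow_le_pow_right₀ hK1 hle
      have hB1 : (0 : ℝ) < 1 + B := by linarith
      calc |w I| ≤ (1 + K) ^ (I.filter fun t => t.val < m + 1).card * (1 + B) := h1
        _ ≤ D := by rw [hD]; exact mul_le_mul_of_nonneg_right h2 (le_of_lt hB1)
    · rw [hzero I hc, abs_zero]; exact hD0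
  have hsumsq : ∑ I : Finset (Fin (m + 1 + c)), w I ^ 2
      ≤ (2 : ℝ) ^ (m + 1 + c) * D ^ 2 := by
    calc ∑ I : Finset (Fin (m + 1 + c)), w I ^ 2
        ≤ ∑ _I : Finset (Fin (m + 1 + c)), D ^ 2 := by
          apply Finset.sum_le_sum
          intro I _
          have : w I ^ 2 = |w I| ^ 2 := (sq_abs _).symm
          rw [this]
          exact pow_le_pow_left₀ (abs_nonneg _) (hall I) 2
      _ = (Finset.univ : Finset (Finset (Fin (m + 1 + c)))).card • D ^ 2 :=
          (Finset.sum_const _)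
      _ = (2 : ℝ) ^ (m + 1 + c) * D ^ 2 := by
          rw [Finset.card_univ, Fintype.card_finset, Fintype.card_fin,
            nsmul_eq_mul]
          push_cast
          ring
  calc normL w ≤ Real.sqrt ((2 : ℝ) ^ (m + 1 + c) * D ^ 2) :=
        Real.sqrt_le_sqrt hsumsq
    _ = Real.sqrt ((2 : ℝ) ^ (m + 1 + c)) * D := by
        rw [Real.sqrt_mul (by positivity), Real.sqrt_sq hD0]
    _ = Real.sqrt (2 ^ (m + 1 + c)) * (1 + K) ^ (m + 1 + c) * (1 + B) := by
        rw [hD]; ring
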